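/- Let P, X, Y be strings, A = P·X and B = P·Y. Then every minimal common supersequence of A and B has P as a prefix. -/

import Mathlib

/-- `C` is a common supersequence of `A` and `B`. -/
def IsCommonSupseq {α : Type*} (A B C : List α) : Prop :=
  A.Sublist C ∧ B.Sublist C

/-- `C` is a minimal common supersequence of `A` and `B`. -/
def IsMinimalCommonSupseq {α : Type*} (A B C : List α) : Prop :=
  IsCommonSupseq A B C ∧ ∀ C', C'.Sublist C → C' ≠ C → ¬ IsCommonSupseq A B C'

/-- Every minimal common supersequence of `P·X` and `P·Y` has `P` as a prefix. -/
theorem stmt_9 {α : Type*} (P X Y S : List α)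
    (h : IsMinimalCommonSupseq (P ++ X) (P ++ Y) S) :
    P <+: S := by
  induction P generalizing S with
  | nil => exact List.nil_prefix
  | cons p P' ih =>
    obtain ⟨⟨hA, hB⟩, hmin⟩ := h
    cases S with
    | nil =>
      have := List.sublist_nil.mp hA
      simp at this
    | cons s S' =>
      by_cases hps : p = s
      · subst hps
        have hA' : (P' ++ X).Sublist S' := by
          have := hA
          rw [List.cons_append, List.cons_sublist_cons] at this
          exact this
        have hB' : (P' ++ Y).Sublist S' := by
          have := hB
          rw [List.cons_append, List.cons_sublist_cons] at this
          exact this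
        have hmin' : ∀ C', C'.Sublist S' → C' ≠ S' →
            ¬ IsCommonSupseq (P' ++ X) (P' ++ Y) C' := by
          intro C' hsub hne ⟨hx, hy⟩
          exact hmin (p :: C') (hsub.cons_cons p) (by simp [hne])
            ⟨by simpa using hx.cons_cons p, by simpa using hy.cons_cons p⟩
        have hpre := ih S' ⟨⟨hA', hB'⟩, hmin'⟩
        exact (List.cons_prefix_cons).mpr ⟨rfl, hpre⟩
      · have hA' : ((p :: P') ++ X).Sublist S' := by
          cases hA with
          | cons _ h => exact h
          | cons_cons => exact absurd rfl hps
        have hB' : ((p :: P') ++ Y).Sublist S' := by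
          cases hB with
          | cons _ h => exact h
          | cons_cons => exact absurd rfl hps
        exact absurd ⟨hA', hB'⟩
          (hmin S' (List.sublist_cons_self s S') (List.cons_ne_self s S').symm)
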